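/- Let κ be a strongly compact cardinal and X a topological space with a subbase 𝒮 such that every cover of X by members of 𝒮 has a subcover of size less than κ. Then X is κ-compact. -/

import Mathlib

universe u

/-- `κ`-compactness: every open cover has a subcover of cardinality less than `κ`. -/
def KCompact (κ : Cardinal.{u}) {X : Type u} (t : TopologicalSpace X) : Prop :=
  ∀ 𝒰 : Set (Set X), (∀ U ∈ 𝒰, t.IsOpen U) → ⋃₀ 𝒰 = Set.univ →
    ∃ 𝒰₀ ⊆ 𝒰, Cardinal.mk 𝒰₀ < κ ∧ ⋃₀ 𝒰₀ = Set.univ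

/-- A filter is `κ`-complete if it is closed under intersections of fewer than `κ` members. -/
def IsKComplete (κ : Cardinal.{u}) {α : Type u} (F : Filter α) : Prop :=
  ∀ S : Set (Set α), Cardinal.mk S < κ → (∀ s ∈ S, s ∈ F) → ⋂₀ S ∈ F

/-- `κ` is strongly compact: every `κ`-complete proper filter extends to a
`κ`-complete ultrafilter. -/
def IsStronglyCompactCard (κ : Cardinal.{u}) : Prop :=
  ∀ (α : Type u) (F : Filter α), F.NeBot → IsKComplete κ F →
    ∃ U : Ultrafilter α, IsKComplete κ (U : Filter α) ∧ F ≤ (U : Filter α)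

open Cardinal Set Filter

/-- If `κ` is singular, a `κ`-complete filter is closed even under intersections of
`κ`-many members. -/
lemma kcomplete_upgrade {κ : Cardinal.{u}} (hκ : Cardinal.aleph0 ≤ κ) (hsing : κ.ord.cof < κ)
    {α : Type u} {F : Filter α} (hF : IsKComplete κ F)
    (S : Set (Set α)) (hS : Cardinal.mk S ≤ κ) (hmem : ∀ s ∈ S, s ∈ F) : ⋂₀ S ∈ F := by
  have hS' : #S ≤ #(κ.ord.ToType) := by rwa [Cardinal.mk_ord_toType κ]
  obtain ⟨e⟩ := (Cardinal.le_def _ _).mp hS'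
  have inst : IsWellOrder κ.ord.ToType (fun a b => a < b) := isWellOrder_lt
  obtain ⟨C, hC, hCcard⟩ := Order.exists_cof_eq κ.ord.ToType
  rw [Ordinal.cof_toType] at hCcard
  have hCκ : #C < κ := hCcard ▸ hsing
  set B : κ.ord.ToType → Set (Set α) := fun c => {s | ∃ h : s ∈ S, e ⟨s, h⟩ ≤ c} with hB
  have hBsub : ∀ c, B c ⊆ S := fun c s hs => hs.1
  have hBcard : ∀ c, #(B c) < κ := by
    intro c
    have hinj : Function.Injective (fun s : B c => (⟨e ⟨s.1, s.2.1⟩, s.2.2⟩ : Set.Iic c)) := by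
      rintro ⟨s, hs⟩ ⟨s', hs'⟩ h
      simp only [Subtype.mk.injEq] at h
      have h2 := e.injective (congrArg Subtype.val h)
      have h3 : s = s' := congrArg Subtype.val h2
      exact Subtype.ext h3
    have h2 : #(Set.Iic c) < κ := by
      have hsubset : Set.Iic c ⊆ insert c (Set.Iio c) := fun x hx => by
        rcases lt_or_eq_of_le (Set.mem_Iic.mp hx) with h | h
        · exact Set.mem_insert_of_mem _ h
        · exact h ▸ Set.mem_insert _ _
      calc #(Set.Iic c) ≤ #(insert c (Set.Iio c) : Set _) := mk_le_mk_of_subset hsubset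
        _ ≤ #(Set.Iio c) + 1 := Cardinal.mk_insert_le
        _ < κ := Cardinal.add_lt_of_lt hκ (Cardinal.mk_Iio_ord_toType c)
            (Cardinal.one_lt_aleph0.trans_le hκ)
    exact (Cardinal.mk_le_of_injective hinj).trans_lt h2
  have hBinter : ∀ c, ⋂₀ (B c) ∈ F :=
    fun c => hF (B c) (hBcard c) (fun s hs => hmem s (hBsub c hs))
  have hT : ⋂₀ ((fun c => ⋂₀ (B c)) '' C) ∈ F := by
    refine hF _ ((Cardinal.mk_image_le).trans_lt hCκ) ?_
    rintro s ⟨c, _, rfl⟩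
    exact hBinter c
  refine Filter.mem_of_superset hT ?_
  intro x hx s hsS
  obtain ⟨c, hcC, hc⟩ := hC (e ⟨s, hsS⟩)
  have hsB : s ∈ B c := ⟨hsS, hc⟩
  exact hx _ (Set.mem_image_of_mem _ hcC) s hsB

/-- A strongly compact cardinal is regular (Ulam-matrix argument rules out singularity). -/
lemma isRegular_of_sc {κ : Cardinal.{u}} (hκ : Cardinal.aleph0 ≤ κ)
    (hsc : IsStronglyCompactCard κ) : κ.IsRegular := by
  by_contra hreg
  have hsing : κ.ord.cof < κ :=
    lt_of_le_of_ne (Ordinal.cof_ord_le κ) (fun h => hreg ⟨hκ, h.ge⟩)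
  set ν := Order.succ κ with hν
  have hκν : κ < ν := Order.lt_succ κ
  set β := ν.ord.ToType with hβdef
  have hβ : #β = ν := Cardinal.mk_ord_toType ν
  -- the filter of co-`≤κ` sets on β
  set F : Filter β :=
    { sets := {A | #(↥Aᶜ) ≤ κ}
      univ_sets := by
        simp only [Set.mem_setOf_eq, Set.compl_univ, Cardinal.mk_emptyCollection]
        exact zero_le
      sets_of_superset := fun hA hAB =>
        le_trans (mk_le_mk_of_subset (compl_subset_compl.mpr hAB)) hA
      inter_sets := fun {A B} hA hB => by
        simp only [Set.mem_setOf_eq, Set.compl_inter] at *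
        calc #(↥(Aᶜ ∪ Bᶜ)) ≤ #(↥Aᶜ) + #(↥Bᶜ) := Cardinal.mk_union_le _ _
          _ ≤ κ + κ := add_le_add hA hB
          _ = κ := Cardinal.add_eq_self hκ } with hFdef
  have hmemF : ∀ A : Set β, A ∈ F ↔ #(↥Aᶜ) ≤ κ := fun A => Iff.rfl
  have hFne : F.NeBot := by
    refine Filter.neBot_iff.mpr (fun hbot => ?_)
    have h0 : (∅ : Set β) ∈ F := hbot ▸ Filter.mem_bot
    rw [hmemF, Set.compl_empty, Cardinal.mk_univ, hβ] at h0
    exact absurd h0 (not_le.mpr hκν)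
  have hFk : IsKComplete κ F := by
    intro S hScard hSmem
    rw [hmemF, Set.compl_sInter]
    calc #(↥(⋃₀ (compl '' S))) ≤ #(compl '' S) * ⨆ s : (compl '' S), #(↥(s : Set β)) :=
          Cardinal.mk_sUnion_le _
      _ ≤ κ * κ := by
          refine mul_le_mul' ((Cardinal.mk_image_le).trans hScard.le) ?_
          refine ciSup_le' (fun i => ?_)
          obtain ⟨s, hs, hrfl⟩ := i.2
          have : #(↥sᶜ) ≤ κ := (hmemF s).mp (hSmem s hs)
          rwa [hrfl] at this
      _ = κ := Cardinal.mul_eq_self hκ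
  obtain ⟨U, hUk, hFU⟩ := hsc β F hFne hFk
  have hFeq : F = (U : Filter β) := U.unique hFU hFne
  have hFU' : ∀ {A : Set β}, A ∈ F → A ∈ U := fun {A} hA => by rw [hFeq] at hA; exact hA
  -- U is closed under intersections of ≤ κ members
  have Up : ∀ S : Set (Set β), #S ≤ κ → (∀ s ∈ S, s ∈ U) → ⋂₀ S ∈ U :=
    fun S h1 h2 => kcomplete_upgrade hκ hsing hUk S h1 h2
  have hsmall : ∀ A : Set β, #(↥A) ≤ κ → Aᶜ ∈ U := by
    intro A h
    refine hFU' ?_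
    rw [hmemF, compl_compl]
    exact h
  -- initial segments are small
  have hIic : ∀ b : β, #(Set.Iic b) ≤ κ := by
    intro b
    have hsubset : Set.Iic b ⊆ insert b (Set.Iio b) := fun x hx => by
      rcases lt_or_eq_of_le (Set.mem_Iic.mp hx) with h | h
      · exact Set.mem_insert_of_mem _ h
      · exact h ▸ Set.mem_insert _ _
    have hIio : #(Set.Iio b) ≤ κ := Order.lt_succ_iff.mp (Cardinal.mk_Iio_ord_toType b)
    calc #(Set.Iic b) ≤ #(insert b (Set.Iio b) : Set _) := mk_le_mk_of_subset hsubset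
      _ ≤ #(Set.Iio b) + 1 := Cardinal.mk_insert_le
      _ ≤ κ + κ := add_le_add hIio (Cardinal.one_le_aleph0.trans hκ)
      _ = κ := Cardinal.add_eq_self hκ
  -- for each b, an injection of its predecessors into a set of size κ
  set γ := κ.ord.ToType with hγdef
  have hγ : #γ = κ := Cardinal.mk_ord_toType κ
  have hemb : ∀ b : β, Nonempty (Set.Iio b ↪ γ) := by
    intro b
    refine (Cardinal.le_def _ _).mp ?_
    rw [hγ]
    exact Order.lt_succ_iff.mp (Cardinal.mk_Iio_ord_toType b)
  have f : ∀ b : β, (↑(Set.Iio b) ↪ γ) := fun b => (hemb b).some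
  -- the Ulam matrix
  set A : γ → β → Set β := fun ξ a => {b | ∃ h : a < b, f b ⟨a, h⟩ = ξ} with hA
  have claim1 : ∀ a : β, ∃ ξ : γ, A ξ a ∈ U := by
    intro a
    by_contra hno
    push_neg at hno
    have hcompl : ∀ ξ : γ, (A ξ a)ᶜ ∈ U :=
      fun ξ => (Ultrafilter.compl_mem_iff_notMem).mpr (hno ξ)
    set T : Set (Set β) := Set.range (fun ξ : γ => (A ξ a)ᶜ) with hT
    have hTU : ⋂₀ T ∈ U := by
      refine Up T (Cardinal.mk_range_le.trans (le_of_eq hγ)) ?_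
      rintro s ⟨ξ, rfl⟩
      exact hcompl ξ
    have hsub : ⋂₀ T ⊆ Set.Iic a := by
      intro b hb
      by_contra hba
      have hab : a < b := not_le.mp hba
      have hmemA : b ∈ A (f b ⟨a, hab⟩) a := ⟨hab, rfl⟩
      exact (hb _ ⟨f b ⟨a, hab⟩, rfl⟩) hmemA
    have h1 : Set.Iic a ∈ U := Filter.mem_of_superset hTU hsub
    have h2 : (Set.Iic a)ᶜ ∈ U := hsmall _ (hIic a)
    have : (∅ : Set β) ∈ U := by
      have := Filter.inter_mem h1 h2
      rwa [Set.inter_compl_self] at this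
    exact absurd this Ultrafilter.empty_notMem
  choose ξ₀ hξ₀ using claim1
  have hninj : ¬ Function.Injective ξ₀ := by
    intro hinj
    have : #β ≤ #γ := Cardinal.mk_le_of_injective hinj
    rw [hβ, hγ] at this
    exact absurd this (not_le.mpr hκν)
  obtain ⟨a, a', heq, hne⟩ := Function.not_injective_iff.mp hninj
  have hmemU : A (ξ₀ a) a ∩ A (ξ₀ a) a' ∈ U := by
    have h2 := hξ₀ a'
    rw [← heq] at h2
    exact Filter.inter_mem (hξ₀ a) h2
  obtain ⟨b, ⟨h1, e1⟩, ⟨h2, e2⟩⟩ := Filter.nonempty_of_mem hmemU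
  have : (⟨a, h1⟩ : Set.Iio b) = ⟨a', h2⟩ := (f b).injective (e1.trans e2.symm)
  exact hne (congrArg Subtype.val this)

theorem stmt_9 (κ : Cardinal.{u}) (hκ : Cardinal.aleph0 ≤ κ)
    (hsc : IsStronglyCompactCard κ)
    (X : Type u) (t : TopologicalSpace X) (𝒮 : Set (Set X))
    (hsub : t = TopologicalSpace.generateFrom 𝒮)
    (hcov : ∀ 𝒰 ⊆ 𝒮, ⋃₀ 𝒰 = Set.univ →
      ∃ 𝒰₀ ⊆ 𝒰, Cardinal.mk 𝒰₀ < κ ∧ ⋃₀ 𝒰₀ = Set.univ) :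
    KCompact κ t := by
  have hreg : κ.IsRegular := isRegular_of_sc hκ hsc
  intro 𝒰 hopen hcover
  by_contra hno
  push_neg at hno
  -- hno : ∀ 𝒰₀ ⊆ 𝒰, #𝒰₀ < κ → ⋃₀ 𝒰₀ ≠ univ
  -- the filter generated by complements of small subunions of 𝒰
  set F : Filter X :=
    { sets := {A | ∃ 𝒱, 𝒱 ⊆ 𝒰 ∧ Cardinal.mk 𝒱 < κ ∧ (⋃₀ 𝒱)ᶜ ⊆ A}
      univ_sets := ⟨∅, Set.empty_subset _, by
        simpa using Cardinal.aleph0_pos.trans_le hκ, Set.subset_univ _⟩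
      sets_of_superset := fun ⟨𝒱, h1, h2, h3⟩ hAB => ⟨𝒱, h1, h2, h3.trans hAB⟩
      inter_sets := fun {A B} ⟨𝒱₁, h11, h12, h13⟩ ⟨𝒱₂, h21, h22, h23⟩ => by
        refine ⟨𝒱₁ ∪ 𝒱₂, Set.union_subset h11 h21,
          (Cardinal.mk_union_le _ _).trans_lt (Cardinal.add_lt_of_lt hκ h12 h22), ?_⟩
        rw [Set.sUnion_union, Set.compl_union]
        exact Set.subset_inter ((Set.inter_subset_left).trans h13)
          ((Set.inter_subset_right).trans h23) } with hFdef
  have hmemF : ∀ A : Set X, A ∈ F ↔ ∃ 𝒱, 𝒱 ⊆ 𝒰 ∧ Cardinal.mk 𝒱 < κ ∧ (⋃₀ 𝒱)ᶜ ⊆ A :=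
    fun A => Iff.rfl
  have hFne : F.NeBot := by
    refine Filter.neBot_iff.mpr (fun hbot => ?_)
    have h0 : (∅ : Set X) ∈ F := hbot ▸ Filter.mem_bot
    obtain ⟨𝒱, h1, h2, h3⟩ := (hmemF _).mp h0
    have : ⋃₀ 𝒱 = Set.univ := by
      rw [← Set.compl_empty_iff]
      exact Set.subset_empty_iff.mp h3
    exact hno 𝒱 h1 h2 this
  have hFk : IsKComplete κ F := by
    intro S hScard hSmem
    have hex : ∀ s : S, ∃ 𝒱, 𝒱 ⊆ 𝒰 ∧ Cardinal.mk 𝒱 < κ ∧ (⋃₀ 𝒱)ᶜ ⊆ (s : Set X) :=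
      fun s => (hmemF _).mp (hSmem s s.2)
    choose g hg1 hg2 hg3 using hex
    refine (hmemF _).mpr ⟨⋃ s : S, g s, Set.iUnion_subset hg1, ?_, ?_⟩
    · exact (Cardinal.card_iUnion_lt_iff_forall_of_isRegular hreg hScard).mpr hg2
    · intro x hx s hsS
      refine hg3 ⟨s, hsS⟩ ?_
      intro hmem
      exact hx (Set.mem_of_subset_of_mem (Set.sUnion_mono (Set.subset_iUnion g ⟨s, hsS⟩)) hmem)
  obtain ⟨U, hUk, hFU⟩ := hsc X F hFne hFk
  have hFeq : F = (U : Filter X) := U.unique hFU hFne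
  have hFU' : ∀ {A : Set X}, A ∈ F → A ∈ U := fun {A} hA => by rw [hFeq] at hA; exact hA
  have hVc : ∀ V ∈ 𝒰, Vᶜ ∈ U := by
    intro V hV
    refine hFU' ((hmemF _).mpr ⟨{V}, Set.singleton_subset_iff.mpr hV, ?_, ?_⟩)
    · rw [Cardinal.mk_singleton]
      exact Cardinal.one_lt_aleph0.trans_le hκ
    · rw [Set.sUnion_singleton]
  -- the subbase elements whose complements are in U cover X
  have hbasis := TopologicalSpace.isTopologicalBasis_of_subbasis (t := t) hsub
  set 𝒮₀ : Set (Set X) := {S | S ∈ 𝒮 ∧ Sᶜ ∈ U} with h𝒮₀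
  have hcovS : ⋃₀ 𝒮₀ = Set.univ := by
    rw [Set.eq_univ_iff_forall]
    intro x
    have hx : x ∈ ⋃₀ 𝒰 := hcover ▸ Set.mem_univ x
    obtain ⟨V, hV, hxV⟩ := hx
    obtain ⟨b, ⟨T, ⟨hTfin, hT𝒮⟩, rfl⟩, hxb, hbV⟩ :=
      hbasis.exists_subset_of_mem_open hxV (hopen V hV)
    have hexS : ∃ S ∈ T, Sᶜ ∈ U := by
      by_contra hnoS
      push_neg at hnoS
      have hTU : ∀ S ∈ T, S ∈ U := fun S hS => Ultrafilter.compl_notMem_iff.mp (hnoS S hS)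
      have hTi : ⋂₀ T ∈ U := (Filter.sInter_mem hTfin).mpr hTU
      have hVU : V ∈ U := Filter.mem_of_superset hTi hbV
      have : (∅ : Set X) ∈ U := by
        have := Filter.inter_mem hVU (hVc V hV)
        rwa [Set.inter_compl_self] at this
      exact absurd this Ultrafilter.empty_notMem
    obtain ⟨S, hST, hSc⟩ := hexS
    exact ⟨S, ⟨hT𝒮 hST, hSc⟩, hxb S hST⟩
  obtain ⟨𝒱₀, h𝒱₀sub, h𝒱₀card, h𝒱₀cov⟩ := hcov 𝒮₀ (fun S hS => hS.1) hcovS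
  have hint : ⋂₀ (compl '' 𝒱₀) ∈ U := by
    refine hUk _ ((Cardinal.mk_image_le).trans_lt h𝒱₀card) ?_
    rintro s ⟨S, hS, rfl⟩
    exact (h𝒱₀sub hS).2
  rw [← Set.compl_sUnion, h𝒱₀cov, Set.compl_univ] at hint
  exact absurd hint Ultrafilter.empty_notMem
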